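/- arXiv:2207.00853 — 2 statements merged into one kernel-verified Lean document; each statement's English description precedes it below -/
import Mathlib

section
/- Assume M > 0. For all finite Borel measures ν, λ⁺, λ⁻ on T one has M·Ψ( ‖λ⁺ − λ⁻‖_TV / (M·(1 + ν(T))) ) ≤ Ent(λ⁺|θ_ν) + Ent(λ⁻|θ_ν), where ‖λ⁺ − λ⁻‖_TV denotes the total variation norm of the finite signed measure λ⁺ − λ⁻. -/
open MeasureTheory
open scoped ENNReal Classical

/-- The entropy function `φ(s) = s·log s − s + 1` (note `φ(0) = 1` since `Real.log 0 = 0`). -/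
noncomputable def phiEnt (s : ℝ) : ℝ := s * Real.log s - s + 1

/-- Relative entropy `Ent(μ|ϑ) = ∫ φ(dμ/dϑ) dϑ` if `μ ≪ ϑ`, `+∞` otherwise. -/
noncomputable def Ent {T : Type*} [MeasurableSpace T] (μ ϑ : Measure T) : ℝ≥0∞ :=
  if μ ≪ ϑ then ∫⁻ x, ENNReal.ofReal (phiEnt ((μ.rnDeriv ϑ x).toReal)) ∂ϑ else ⊤

/-- `c_ν(x) = ∫ c(x,y) ν(dy)`. -/
noncomputable def cInt {T : Type*} [MeasurableSpace T] (c : T → T → ℝ) (ν : Measure T) (x : T) : ℝ :=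
  ∫ y, c x y ∂ν

/-- The birth kernel `κ⁺_ν = c_ν · γ`. -/
noncomputable def kBirth {T : Type*} [MeasurableSpace T] (γ : Measure T) (c : T → T → ℝ)
    (ν : Measure T) : Measure T :=
  γ.withDensity fun x => ENNReal.ofReal (cInt c ν x)

/-- The death kernel `κ⁻_ν = c_ν · ν`. -/
noncomputable def kDeath {T : Type*} [MeasurableSpace T] (c : T → T → ℝ)
    (ν : Measure T) : Measure T :=
  ν.withDensity fun x => ENNReal.ofReal (cInt c ν x)

/-- The geometric mean `θ_ν` of `κ⁺_ν` and `κ⁻_ν`. -/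
noncomputable def thetaM {T : Type*} [MeasurableSpace T] (γ : Measure T) (c : T → T → ℝ)
    (ν : Measure T) : Measure T :=
  (kBirth γ c ν + kDeath c ν).withDensity fun x =>
    ((kBirth γ c ν).rnDeriv (kBirth γ c ν + kDeath c ν) x *
      (kDeath c ν).rnDeriv (kBirth γ c ν + kDeath c ν) x) ^ (1 / 2 : ℝ)

/-- The function `Ψ(s) = s·log((s + √(s²+4))/2) − √(s²+4) + 2`. -/
noncomputable def Psi (s : ℝ) : ℝ :=
  s * Real.log ((s + Real.sqrt (s ^ 2 + 4)) / 2) - Real.sqrt (s ^ 2 + 4) + 2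


lemma phiEnt_nonneg {x : ℝ} (hx : 0 ≤ x) : 0 ≤ phiEnt x := by
  rcases hx.eq_or_lt with h | h
  · simp [phiEnt, ← h]
  · have h1 : Real.log x⁻¹ ≤ x⁻¹ - 1 := Real.log_le_sub_one_of_pos (by positivity)
    rw [Real.log_inv] at h1
    have h2 : x * (1 - x⁻¹) ≤ x * Real.log x := by
      apply mul_le_mul_of_nonneg_left _ h.le; linarith
    have h3 : x * (1 - x⁻¹) = x - 1 := by field_simp
    unfold phiEnt; nlinarith

lemma fenchel (t : ℝ) {x : ℝ} (hx : 0 ≤ x) : t * x ≤ phiEnt x + Real.exp t - 1 := by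
  rcases hx.eq_or_lt with h | h
  · rw [← h]
    have := Real.exp_pos t
    simp [phiEnt]
    linarith
  · have h1 : t - Real.log x + 1 ≤ Real.exp (t - Real.log x) := by
      linarith [Real.add_one_le_exp (t - Real.log x)]
    have h2 : Real.exp (t - Real.log x) = Real.exp t / x := by
      rw [Real.exp_sub, Real.exp_log h]
    have h3 : x * (t - Real.log x + 1) ≤ Real.exp t := by
      rw [h2] at h1
      calc x * (t - Real.log x + 1) ≤ x * (Real.exp t / x) :=
            mul_le_mul_of_nonneg_left h1 h.le
        _ = Real.exp t := by field_simp
    unfold phiEnt; nlinarith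

lemma pointwise_bound {t u w : ℝ} (ht : 0 ≤ t) (hu : 0 ≤ u) (hw : 0 ≤ w) :
    t * |u - w| - (Real.exp t + Real.exp (-t) - 2) ≤ phiEnt u + phiEnt w := by
  rcases le_total w u with h | h
  · rw [abs_of_nonneg (by linarith)]
    nlinarith [fenchel t hu, fenchel (-t) hw]
  · rw [abs_of_nonpos (by linarith)]
    nlinarith [fenchel (-t) hu, fenchel t hw]

lemma sinh_mul_le {a y : ℝ} (ha0 : 0 ≤ a) (ha1 : a ≤ 1) (hy : 0 ≤ y) :
    Real.sinh (a * y) ≤ a * Real.sinh y := by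
  have hF : ∀ x : ℝ, HasDerivAt (fun x => a * Real.sinh x - Real.sinh (a * x))
      (a * Real.cosh x - Real.cosh (a * x) * a) x := by
    intro x
    refine ((Real.hasDerivAt_sinh x).const_mul a).sub ?_
    have h1 : HasDerivAt (fun x : ℝ => a * x) a x := by
      simpa using (hasDerivAt_id x).const_mul a
    exact (Real.hasDerivAt_sinh (a * x)).comp x h1
  have hmono : MonotoneOn (fun x => a * Real.sinh x - Real.sinh (a * x)) (Set.Ici 0) := by
    apply monotoneOn_of_deriv_nonneg (convex_Ici 0)
    · exact ((continuous_const.mul Real.continuous_sinh).sub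
        (Real.continuous_sinh.comp (continuous_const.mul continuous_id))).continuousOn
    · intro x _
      exact (hF x).differentiableAt.differentiableWithinAt
    · intro x hx
      rw [(hF x).deriv]
      rw [interior_Ici] at hx
      have hx0 : (0:ℝ) < x := hx
      have hc : Real.cosh (a * x) ≤ Real.cosh x := by
        rw [Real.cosh_le_cosh, abs_of_nonneg (by positivity), abs_of_nonneg hx0.le]
        nlinarith
      nlinarith
  have h0 : (0:ℝ) ∈ Set.Ici (0:ℝ) := Set.self_mem_Ici
  have hyy : y ∈ Set.Ici (0:ℝ) := hy
  have := hmono h0 hyy hy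
  simpa using this

lemma cosh_scale {a y : ℝ} (ha0 : 0 ≤ a) (ha1 : a ≤ 1) (hy : 0 ≤ y) :
    Real.cosh (a * y) - 1 ≤ a ^ 2 * (Real.cosh y - 1) := by
  have g1 : Real.cosh (a * y) = 1 + 2 * Real.sinh (a * (y / 2)) ^ 2 := by
    rw [show a * y = 2 * (a * (y / 2)) by ring, Real.cosh_two_mul, Real.cosh_sq']; ring
  have g2 : Real.cosh y = 1 + 2 * Real.sinh (y / 2) ^ 2 := by
    conv_lhs => rw [show y = 2 * (y / 2) by ring]
    rw [Real.cosh_two_mul, Real.cosh_sq']; ring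
  have h3 : Real.sinh (a * (y / 2)) ≤ a * Real.sinh (y / 2) := sinh_mul_le ha0 ha1 (by positivity)
  have h4 : 0 ≤ Real.sinh (a * (y / 2)) := Real.sinh_nonneg_iff.mpr (by positivity)
  have h5 : 0 ≤ Real.sinh (y / 2) := Real.sinh_nonneg_iff.mpr (by positivity)
  rw [g1, g2]
  nlinarith

lemma psi_eq {s : ℝ} (hs : 0 ≤ s) :
    Psi s = s * Real.arsinh (s / 2) - 2 * Real.cosh (Real.arsinh (s / 2)) + 2 := by
  have hsqrt : Real.sqrt (s ^ 2 + 4) = 2 * Real.sqrt (1 + (s / 2) ^ 2) := by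
    rw [show (s ^ 2 + 4 : ℝ) = 2 ^ 2 * (1 + (s / 2) ^ 2) by ring,
      Real.sqrt_mul (by positivity), Real.sqrt_sq (by norm_num)]
  have hlog : (s + Real.sqrt (s ^ 2 + 4)) / 2 = s / 2 + Real.sqrt (1 + (s / 2) ^ 2) := by
    rw [hsqrt]; ring
  unfold Psi
  rw [hlog, Real.cosh_arsinh, hsqrt]
  simp only [Real.arsinh]

lemma core_ineq {M Mp ρ v V : ℝ} (hM : 0 < M) (hMp : M ≤ Mp) (hρ : 0 ≤ ρ)
    (hρM : ρ * M ≤ Mp ^ 2) (hv : 0 ≤ v) (hvV : v ≤ V) :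
    M * Psi (v / Mp) ≤ (M / Mp * Real.arsinh (v / (2 * Mp))) * V
      - ρ * (2 * Real.cosh (M / Mp * Real.arsinh (v / (2 * Mp))) - 2) := by
  have hMp0 : 0 < Mp := lt_of_lt_of_le hM hMp
  set t₀ := Real.arsinh (v / (2 * Mp)) with ht₀
  have ht₀0 : 0 ≤ t₀ := Real.arsinh_nonneg_iff.mpr (by positivity)
  set a := M / Mp with ha
  have ha0 : 0 < a := by positivity
  have ha1 : a ≤ 1 := by rw [ha, div_le_one hMp0]; exact hMp
  have hpsi : Psi (v / Mp) = (v / Mp) * t₀ - 2 * Real.cosh t₀ + 2 := by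
    rw [psi_eq (show (0:ℝ) ≤ v / Mp by positivity), show v / Mp / 2 = v / (2 * Mp) by ring]
  have hcosh1 : Real.cosh (a * t₀) - 1 ≤ a ^ 2 * (Real.cosh t₀ - 1) := cosh_scale ha0.le ha1 ht₀0
  have h4 : ρ * a ^ 2 ≤ M := by
    have h5 : ρ * M ^ 2 ≤ M * Mp ^ 2 := by nlinarith
    calc ρ * a ^ 2 = ρ * M ^ 2 / Mp ^ 2 := by rw [ha]; field_simp
      _ ≤ M * Mp ^ 2 / Mp ^ 2 := by
          apply div_le_div_of_nonneg_right h5 (by positivity) |>.trans_eq rfl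
      _ = M := by field_simp
  have hch0 : 0 ≤ Real.cosh t₀ - 1 := by linarith [Real.one_le_cosh t₀]
  have hch1 : 1 ≤ Real.cosh (a * t₀) := Real.one_le_cosh _
  have heq : M * Psi (v / Mp) = (a * t₀) * v - M * (2 * Real.cosh t₀ - 2) := by
    rw [hpsi, ha]; field_simp; ring
  have hcosh2 : ρ * (2 * Real.cosh (a * t₀) - 2) ≤ M * (2 * Real.cosh t₀ - 2) := by
    nlinarith
  have htv : (a * t₀) * v ≤ (a * t₀) * V :=
    mul_le_mul_of_nonneg_left hvV (by positivity)
  calc M * Psi (v / Mp) = (a * t₀) * v - M * (2 * Real.cosh t₀ - 2) := heq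
    _ ≤ (a * t₀) * V - ρ * (2 * Real.cosh (a * t₀) - 2) := by linarith
    _ = (a * t₀) * V - ρ * (2 * Real.cosh (a * t₀) - 2) := rfl

lemma ennreal_sqrt_mul_le_add (a b : ℝ≥0∞) : (a * b) ^ (1 / 2 : ℝ) ≤ a + b := by
  have h3 : a * b ≤ (a + b) ^ (2 : ℝ) := by
    rw [show (2 : ℝ) = ((2 : ℕ) : ℝ) by norm_num, ENNReal.rpow_natCast, pow_two]
    exact mul_le_mul' le_self_add le_add_self
  calc (a * b) ^ (1 / 2 : ℝ) ≤ ((a + b) ^ (2 : ℝ)) ^ (1 / 2 : ℝ) :=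
      ENNReal.rpow_le_rpow h3 (by norm_num)
    _ = a + b := by rw [← ENNReal.rpow_mul]; norm_num


lemma tv_le_integral_abs {T : Type*} [MeasurableSpace T] (μ₁ μ₂ θ : Measure T)
    [IsFiniteMeasure μ₁] [IsFiniteMeasure μ₂] [IsFiniteMeasure θ]
    (h₁ : μ₁ ≪ θ) (h₂ : μ₂ ≪ θ) :
    (((μ₁.toSignedMeasure - μ₂.toSignedMeasure).totalVariation Set.univ)).toReal ≤
      ∫ x, |(μ₁.rnDeriv θ x).toReal - (μ₂.rnDeriv θ x).toReal| ∂θ := by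
  set s := μ₁.toSignedMeasure - μ₂.toSignedMeasure with hs
  obtain ⟨i, hi₁, hi₂, hi₃, hpos, hneg⟩ := s.toJordanDecomposition_spec
  set f := fun x => (μ₁.rnDeriv θ x).toReal with hf
  set g := fun x => (μ₂.rnDeriv θ x).toReal with hg
  have hf_int : Integrable f θ := Measure.integrable_toReal_rnDeriv
  have hg_int : Integrable g θ := Measure.integrable_toReal_rnDeriv
  have habs : Integrable (fun x => |f x - g x|) θ := (hf_int.sub hg_int).abs
  have hTV : (s.totalVariation Set.univ).toReal = s i + (- s iᶜ) := by
    rw [SignedMeasure.totalVariation, Measure.add_apply, hpos, hneg,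
      SignedMeasure.toMeasureOfZeroLE_apply _ hi₂ hi₁ MeasurableSet.univ,
      SignedMeasure.toMeasureOfLEZero_apply _ hi₃ hi₁.compl MeasurableSet.univ]
    rw [← ENNReal.coe_add, ENNReal.coe_toReal]
    simp [Set.inter_univ]
  have hsub : ∀ j : Set T, MeasurableSet j → s j = ∫ x in j, (f x - g x) ∂θ := by
    intro j hj
    rw [hs, VectorMeasure.sub_apply, Measure.toSignedMeasure_apply_measurable hj,
      Measure.toSignedMeasure_apply_measurable hj,
      ← Measure.setIntegral_toReal_rnDeriv h₁ j, ← Measure.setIntegral_toReal_rnDeriv h₂ j,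
      ← integral_sub hf_int.integrableOn hg_int.integrableOn]
  have b1 : s i ≤ ∫ x in i, |f x - g x| ∂θ := by
    rw [hsub i hi₁]
    exact integral_mono (hf_int.sub hg_int).integrableOn habs.integrableOn
      (fun x => le_abs_self _)
  have b2 : - s iᶜ ≤ ∫ x in iᶜ, |f x - g x| ∂θ := by
    rw [hsub iᶜ hi₁.compl]
    rw [← integral_neg]
    refine integral_mono ((hf_int.sub hg_int).integrableOn).neg habs.integrableOn ?_
    intro x
    simp only [Pi.neg_apply]
    rw [neg_sub]
    exact (le_abs_self _).trans_eq (abs_sub_comm _ _)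
  have hsplit : ∫ x in i, |f x - g x| ∂θ + ∫ x in iᶜ, |f x - g x| ∂θ
      = ∫ x, |f x - g x| ∂θ := integral_add_compl hi₁ habs
  linarith [hTV, b1, b2]

/-- Lemma 2.4, inequality (2.6): with `M = ‖c‖_∞·(1 + γ(T)) > 0`, for all finite measures
`ν, λ⁺, λ⁻`, `M·Ψ(‖λ⁺ − λ⁻‖_TV/(M·(1 + ν(T)))) ≤ Ent(λ⁺|θ_ν) + Ent(λ⁻|θ_ν)`. -/
theorem net_flux_lower_bound {T : Type*} [TopologicalSpace T] [CompactSpace T] [PolishSpace T]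
    [MeasurableSpace T] [BorelSpace T]
    (γ : Measure T) [IsFiniteMeasure γ]
    (c : T → T → ℝ) (hc_meas : Measurable fun p : T × T => c p.1 p.2)
    (hc_nonneg : ∀ x y, 0 ≤ c x y)
    (hc_bdd : BddAbove (Set.range fun p : T × T => c p.1 p.2))
    (hc_diag : ∀ x, c x x = 0)
    (hM : 0 < (⨆ p : T × T, c p.1 p.2) * (1 + (γ Set.univ).toReal))
    (ν lamP lamM : Measure T) [IsFiniteMeasure ν] [IsFiniteMeasure lamP] [IsFiniteMeasure lamM] :
    ENNReal.ofReal ((⨆ p : T × T, c p.1 p.2) * (1 + (γ Set.univ).toReal) *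
        Psi ((((lamP.toSignedMeasure - lamM.toSignedMeasure).totalVariation Set.univ).toReal) /
          ((⨆ p : T × T, c p.1 p.2) * (1 + (γ Set.univ).toReal) *
            (1 + (ν Set.univ).toReal)))) ≤
      Ent lamP (thetaM γ c ν) + Ent lamM (thetaM γ c ν) := by
  classical
  have hγT : (0:ℝ) ≤ (γ Set.univ).toReal := ENNReal.toReal_nonneg
  have hνT : (0:ℝ) ≤ (ν Set.univ).toReal := ENNReal.toReal_nonneg
  set C := ⨆ p : T × T, c p.1 p.2 with hC
  set γT := (γ Set.univ).toReal with hγTdef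
  set νT := (ν Set.univ).toReal with hνTdef
  have hCpos : 0 < C := by nlinarith
  set M := C * (1 + γT) with hMdef
  set Mp := M * (1 + νT) with hMpdef
  have hM0 : 0 < M := hM
  have hMp0 : 0 < Mp := by nlinarith
  have hMMp : M ≤ Mp := by nlinarith
  -- bounds on c and cInt
  have hcC : ∀ x y, c x y ≤ C := fun x y => le_ciSup hc_bdd (x, y)
  have hcInt_nonneg : ∀ x, 0 ≤ cInt c ν x := fun x => integral_nonneg fun y => hc_nonneg x y
  have hcInt_int : ∀ x, Integrable (fun y => c x y) ν := by
    intro x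
    refine (integrable_const C).mono' ?_ ?_
    · exact (hc_meas.comp (measurable_const.prodMk measurable_id)).aestronglyMeasurable
    · exact ae_of_all _ fun y => by
        rw [Real.norm_eq_abs, abs_of_nonneg (hc_nonneg x y)]; exact hcC x y
  have hcInt_le : ∀ x, cInt c ν x ≤ C * νT := by
    intro x
    calc cInt c ν x ≤ ∫ _, C ∂ν := integral_mono (hcInt_int x) (integrable_const C)
          (fun y => hcC x y)
      _ = νT * C := by rw [integral_const, smul_eq_mul, Measure.real, hνTdef]
      _ = C * νT := mul_comm _ _
  -- kernels
  set κp := kBirth γ c ν with hκp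
  set κm := kDeath c ν with hκm
  have hκp_univ : κp Set.univ ≤ ENNReal.ofReal (C * νT) * γ Set.univ := by
    rw [hκp, kBirth, withDensity_apply _ MeasurableSet.univ, Measure.restrict_univ]
    calc ∫⁻ x, ENNReal.ofReal (cInt c ν x) ∂γ
        ≤ ∫⁻ _, ENNReal.ofReal (C * νT) ∂γ :=
          lintegral_mono fun x => ENNReal.ofReal_le_ofReal (hcInt_le x)
      _ = ENNReal.ofReal (C * νT) * γ Set.univ := lintegral_const _
  have hκm_univ : κm Set.univ ≤ ENNReal.ofReal (C * νT) * ν Set.univ := by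
    rw [hκm, kDeath, withDensity_apply _ MeasurableSet.univ, Measure.restrict_univ]
    calc ∫⁻ x, ENNReal.ofReal (cInt c ν x) ∂ν
        ≤ ∫⁻ _, ENNReal.ofReal (C * νT) ∂ν :=
          lintegral_mono fun x => ENNReal.ofReal_le_ofReal (hcInt_le x)
      _ = ENNReal.ofReal (C * νT) * ν Set.univ := lintegral_const _
  haveI hκpf : IsFiniteMeasure κp :=
    ⟨lt_of_le_of_lt hκp_univ (ENNReal.mul_lt_top ENNReal.ofReal_lt_top (measure_lt_top _ _))⟩
  haveI hκmf : IsFiniteMeasure κm :=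
    ⟨lt_of_le_of_lt hκm_univ (ENNReal.mul_lt_top ENNReal.ofReal_lt_top (measure_lt_top _ _))⟩
  set θ := thetaM γ c ν with hθ
  have hrn_le : ∀ μ' : Measure T, ∫⁻ x, μ'.rnDeriv (κp + κm) x ∂(κp + κm) ≤ μ' Set.univ := by
    intro μ'
    calc ∫⁻ x, μ'.rnDeriv (κp + κm) x ∂(κp + κm)
        = (κp + κm).withDensity (μ'.rnDeriv (κp + κm)) Set.univ := by
          rw [withDensity_apply _ MeasurableSet.univ, Measure.restrict_univ]
      _ ≤ μ' Set.univ := Measure.le_iff'.1 (Measure.withDensity_rnDeriv_le _ _) Set.univ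
  have hθ_le : θ Set.univ ≤ κp Set.univ + κm Set.univ := by
    rw [hθ, thetaM, withDensity_apply _ MeasurableSet.univ, Measure.restrict_univ, ← hκp, ← hκm]
    calc ∫⁻ x, (κp.rnDeriv (κp + κm) x * κm.rnDeriv (κp + κm) x) ^ (1 / 2 : ℝ) ∂(κp + κm)
        ≤ ∫⁻ x, (κp.rnDeriv (κp + κm) x + κm.rnDeriv (κp + κm) x) ∂(κp + κm) :=
          lintegral_mono fun x => ennreal_sqrt_mul_le_add _ _
      _ = ∫⁻ x, κp.rnDeriv (κp + κm) x ∂(κp + κm)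
          + ∫⁻ x, κm.rnDeriv (κp + κm) x ∂(κp + κm) :=
          lintegral_add_left (Measure.measurable_rnDeriv _ _) _
      _ ≤ κp Set.univ + κm Set.univ := add_le_add (hrn_le κp) (hrn_le κm)
  haveI hθ_fin : IsFiniteMeasure θ :=
    ⟨lt_of_le_of_lt hθ_le (ENNReal.add_lt_top.mpr ⟨measure_lt_top _ _, measure_lt_top _ _⟩)⟩
  set θT := (θ Set.univ).toReal with hθTdef
  have hθT0 : 0 ≤ θT := ENNReal.toReal_nonneg
  have hθT_le : θT ≤ C * νT * γT + C * νT * νT := by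
    have h1 : θ Set.univ ≤ ENNReal.ofReal (C * νT * γT + C * νT * νT) := by
      refine hθ_le.trans ((add_le_add hκp_univ hκm_univ).trans ?_)
      rw [ENNReal.ofReal_add (by positivity) (by positivity)]
      have e1 : γ Set.univ = ENNReal.ofReal γT := (ENNReal.ofReal_toReal (measure_ne_top _ _)).symm
      have e2 : ν Set.univ = ENNReal.ofReal νT := (ENNReal.ofReal_toReal (measure_ne_top _ _)).symm
      rw [e1, e2, ← ENNReal.ofReal_mul (by positivity), ← ENNReal.ofReal_mul (by positivity)]
    exact ENNReal.toReal_le_of_le_ofReal (by positivity) h1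
  have hMθ : θT * M ≤ Mp ^ 2 := by
    have key : νT * (γT + νT) ≤ (1 + γT) * ((1 + νT) ^ 2) := by nlinarith [mul_nonneg hγT hνT, mul_nonneg (mul_nonneg hγT hνT) hνT, sq_nonneg νT]
    have h2 : C * νT * γT + C * νT * νT ≤ M * (1 + νT) ^ 2 := by
      rw [hMdef]; nlinarith
    calc θT * M ≤ (M * (1 + νT) ^ 2) * M := by nlinarith
      _ = Mp ^ 2 := by rw [hMpdef]; ring
  -- absolute continuity case split
  by_cases hP : lamP ≪ θ
  swap
  · simp only [Ent, if_neg hP]; rw [top_add]; exact le_top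
  by_cases hQ : lamM ≪ θ
  swap
  · simp only [Ent, if_neg hQ]; rw [add_top]; exact le_top
  simp only [Ent, if_pos hP, if_pos hQ]
  set f := fun x => (lamP.rnDeriv θ x).toReal with hfdef
  set g := fun x => (lamM.rnDeriv θ x).toReal with hgdef
  by_cases hIf : ∫⁻ x, ENNReal.ofReal (phiEnt (f x)) ∂θ = ⊤
  · rw [hIf, top_add]; exact le_top
  by_cases hIg : ∫⁻ x, ENNReal.ofReal (phiEnt (g x)) ∂θ = ⊤
  · rw [hIg, add_top]; exact le_top
  have hf_meas : Measurable f := (Measure.measurable_rnDeriv _ _).ennreal_toReal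
  have hg_meas : Measurable g := (Measure.measurable_rnDeriv _ _).ennreal_toReal
  have hphi_meas : Measurable phiEnt := by
    unfold phiEnt
    exact ((measurable_id.mul Real.measurable_log).sub measurable_id).add measurable_const
  have hf_nonneg : ∀ x, 0 ≤ f x := fun x => ENNReal.toReal_nonneg
  have hg_nonneg : ∀ x, 0 ≤ g x := fun x => ENNReal.toReal_nonneg
  have hφf_int : Integrable (fun x => phiEnt (f x)) θ := by
    refine ⟨(hphi_meas.comp hf_meas).aestronglyMeasurable, ?_⟩
    rw [hasFiniteIntegral_iff_ofReal (ae_of_all _ fun x => phiEnt_nonneg (hf_nonneg x))]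
    exact Ne.lt_top hIf
  have hφg_int : Integrable (fun x => phiEnt (g x)) θ := by
    refine ⟨(hphi_meas.comp hg_meas).aestronglyMeasurable, ?_⟩
    rw [hasFiniteIntegral_iff_ofReal (ae_of_all _ fun x => phiEnt_nonneg (hg_nonneg x))]
    exact Ne.lt_top hIg
  have hf_int : Integrable f θ := Measure.integrable_toReal_rnDeriv
  have hg_int : Integrable g θ := Measure.integrable_toReal_rnDeriv
  have habs_int : Integrable (fun x => |f x - g x|) θ := (hf_int.sub hg_int).abs
  rw [← ofReal_integral_eq_lintegral_ofReal hφf_int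
      (ae_of_all _ fun x => phiEnt_nonneg (hf_nonneg x)),
    ← ofReal_integral_eq_lintegral_ofReal hφg_int
      (ae_of_all _ fun x => phiEnt_nonneg (hg_nonneg x)),
    ← ENNReal.ofReal_add (integral_nonneg fun x => phiEnt_nonneg (hf_nonneg x))
      (integral_nonneg fun x => phiEnt_nonneg (hg_nonneg x))]
  apply ENNReal.ofReal_le_ofReal
  set v := ((lamP.toSignedMeasure - lamM.toSignedMeasure).totalVariation Set.univ).toReal with hv
  have hv0 : 0 ≤ v := ENNReal.toReal_nonneg
  have hvV : v ≤ ∫ x, |f x - g x| ∂θ := tv_le_integral_abs lamP lamM θ hP hQ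
  set t := M / Mp * Real.arsinh (v / (2 * Mp)) with ht
  have ht0 : 0 ≤ t := mul_nonneg (by positivity) (Real.arsinh_nonneg_iff.mpr (by positivity))
  have hcore := core_ineq hM0 hMMp hθT0 hMθ hv0 hvV
  refine hcore.trans ?_
  rw [← ht]
  have hcosh_exp : 2 * Real.cosh t - 2 = Real.exp t + Real.exp (-t) - 2 := by
    rw [Real.cosh_eq]; ring
  have hlhs_int : Integrable (fun x => t * |f x - g x| - (Real.exp t + Real.exp (-t) - 2)) θ :=
    (habs_int.const_mul t).sub (integrable_const _)
  have hint : ∫ x, (t * |f x - g x| - (Real.exp t + Real.exp (-t) - 2)) ∂θ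
      = t * (∫ x, |f x - g x| ∂θ) - θT * (Real.exp t + Real.exp (-t) - 2) := by
    rw [integral_sub (habs_int.const_mul t) (integrable_const _), integral_const_mul,
      integral_const, smul_eq_mul, hθTdef, Measure.real]
  calc t * (∫ x, |f x - g x| ∂θ) - θT * (2 * Real.cosh t - 2)
      = ∫ x, (t * |f x - g x| - (Real.exp t + Real.exp (-t) - 2)) ∂θ := by
        rw [hint, hcosh_exp]
    _ ≤ ∫ x, (phiEnt (f x) + phiEnt (g x)) ∂θ := by
        refine integral_mono hlhs_int (hφf_int.add hφg_int) ?_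
        intro x
        exact pointwise_bound ht0 (hf_nonneg x) (hg_nonneg x)
    _ = (∫ x, phiEnt (f x) ∂θ) + ∫ x, phiEnt (g x) ∂θ := integral_add hφf_int hφg_int
end

section
/- For every n > 0, every N ≥ 1, and every bounded measurable function ω : (Measure T) × T → ℝ, one has ∫_{T^{N+1}} Σ_{i=1}^{N+1} Σ_{j=1}^{N+1} ω( (1/n)·Σ_{k≠i} δ_{x_k}, x_i ) · c(x_i, x_j) γ^{⊗(N+1)}(d𝐱) = (N+1) · ∫_{T^N} Σ_{j=1}^N ( ∫_T ω( (1/n)·Σ_{k=1}^N δ_{x_k}, z ) · c(z, x_j) γ(dz) ) γ^{⊗N}(d𝐱). -/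
open MeasureTheory
open scoped ENNReal Classical

/-- The rescaled empirical measure `L_N(𝐱) = (1/n)·Σ_{k} δ_{x_k}`. -/
noncomputable def empMeas {T : Type*} [MeasurableSpace T] (n : ℝ) {m : ℕ} (x : Fin m → T) :
    Measure T :=
  ENNReal.ofReal (1 / n) • ∑ k : Fin m, Measure.dirac (x k)

/-- The rescaled empirical measure with the `i`-th particle removed:
`(1/n)·Σ_{k ≠ i} δ_{x_k}`. -/
noncomputable def empMeasErase {T : Type*} [MeasurableSpace T] (n : ℝ) {m : ℕ} (x : Fin m → T)
    (i : Fin m) : Measure T :=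
  ENNReal.ofReal (1 / n) • ∑ k ∈ Finset.univ.erase i, Measure.dirac (x k)

lemma aux_integrable_of_bounded {α : Type*} [MeasurableSpace α] {μ : Measure α}
    [IsFiniteMeasure μ] {f : α → ℝ} (hf : Measurable f) {C : ℝ} (h : ∀ x, |f x| ≤ C) :
    Integrable f μ :=
  (integrable_const C).mono' hf.aestronglyMeasurable
    (Filter.Eventually.of_forall fun x => by simpa using h x)

lemma aux_measurable_empMeas {T : Type*} [MeasurableSpace T] (n : ℝ) (m : ℕ) :
    Measurable fun x : Fin m → T => empMeas n x := by
  apply Measure.measurable_of_measurable_coe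
  intro t ht
  simp only [empMeas, Measure.smul_apply, smul_eq_mul, Measure.finset_sum_apply,
    Measure.dirac_apply' _ ht]
  exact (Finset.measurable_sum _ fun k _ =>
    ((measurable_one.indicator ht).comp (measurable_pi_apply k))).const_mul _

lemma aux_measurable_empMeasErase {T : Type*} [MeasurableSpace T] (n : ℝ) (m : ℕ) (i : Fin m) :
    Measurable fun x : Fin m → T => empMeasErase n x i := by
  apply Measure.measurable_of_measurable_coe
  intro t ht
  simp only [empMeasErase, Measure.smul_apply, smul_eq_mul, Measure.finset_sum_apply,
    Measure.dirac_apply' _ ht]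
  exact (Finset.measurable_sum _ fun k _ =>
    ((measurable_one.indicator ht).comp (measurable_pi_apply k))).const_mul _

lemma aux_erase_eq_image {m : ℕ} (i : Fin (m + 1)) :
    Finset.univ.erase i = Finset.image i.succAbove Finset.univ := by
  ext k
  simp [Finset.mem_erase, Fin.exists_succAbove_eq_iff]

lemma aux_empMeasErase_insertNth {T : Type*} [MeasurableSpace T] (n : ℝ) {m : ℕ}
    (i : Fin (m + 1)) (z : T) (y : Fin m → T) :
    empMeasErase n (i.insertNth z y) i = empMeas n y := by
  unfold empMeasErase empMeas
  congr 1
  rw [aux_erase_eq_image i, Finset.sum_image (fun a _ b _ h => Fin.succAbove_right_injective h)]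
  exact Finset.sum_congr rfl fun j _ => by rw [Fin.insertNth_apply_succAbove]

lemma aux_abs_sum_le {ι : Type*} (s : Finset ι) (f : ι → ℝ) {C : ℝ}
    (h : ∀ i ∈ s, |f i| ≤ C) : |∑ i ∈ s, f i| ≤ s.card * C := by
  calc |∑ i ∈ s, f i| ≤ ∑ i ∈ s, |f i| := Finset.abs_sum_le_sum_abs _ _
    _ ≤ ∑ _i ∈ s, C := Finset.sum_le_sum h
    _ = s.card * C := by rw [Finset.sum_const, nsmul_eq_mul]

/-- The fixed-`N` symmetrization identity at the core of the proof of Lemma 3.2. -/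
theorem symmetrization_identity {T : Type*} [TopologicalSpace T] [CompactSpace T] [PolishSpace T]
    [MeasurableSpace T] [BorelSpace T]
    (γ : Measure T) [IsFiniteMeasure γ]
    (c : T → T → ℝ) (hc_meas : Measurable fun p : T × T => c p.1 p.2)
    (hc_nonneg : ∀ x y, 0 ≤ c x y)
    (hc_bdd : BddAbove (Set.range fun p : T × T => c p.1 p.2))
    (hc_diag : ∀ x, c x x = 0)
    (n : ℝ) (hn : 0 < n) (N : ℕ) (hN : 1 ≤ N)
    (ω : Measure T → T → ℝ)
    (hω_meas : Measurable fun p : Measure T × T => ω p.1 p.2)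
    (hω_bdd : ∃ B : ℝ, ∀ μ x, |ω μ x| ≤ B) :
    ∫ x : Fin (N + 1) → T,
        (∑ i : Fin (N + 1), ∑ j : Fin (N + 1),
          ω (empMeasErase n x i) (x i) * c (x i) (x j))
        ∂(Measure.pi fun _ : Fin (N + 1) => γ) =
      (N + 1) * ∫ x : Fin N → T,
        (∑ j : Fin N, ∫ z, ω (empMeas n x) z * c z (x j) ∂γ)
        ∂(Measure.pi fun _ : Fin N => γ) := by
  classical
  obtain ⟨B, hB⟩ := hω_bdd
  obtain ⟨M, hM⟩ := hc_bdd
  have hcM : ∀ x y, c x y ≤ M := fun x y => hM ⟨(x, y), rfl⟩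
  set B' : ℝ := max B 0 with hB'
  set M' : ℝ := max M 0 with hM'
  have hB'0 : 0 ≤ B' := le_max_right _ _
  have hM'0 : 0 ≤ M' := le_max_right _ _
  have hωB' : ∀ μ x, |ω μ x| ≤ B' := fun μ x => le_trans (hB μ x) (le_max_left _ _)
  have hcM' : ∀ x y, |c x y| ≤ M' := fun x y => by
    rw [abs_of_nonneg (hc_nonneg x y)]; exact le_trans (hcM x y) (le_max_left _ _)
  have hterm : ∀ (μ : Measure T) (x y : T), |ω μ x * c x y| ≤ B' * M' := fun μ x y => by
    rw [abs_mul]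
    exact mul_le_mul (hωB' μ x) (hcM' x y) (abs_nonneg _) hB'0
  set πN : Measure (Fin N → T) := Measure.pi fun _ : Fin N => γ with hπN
  set F : T × (Fin N → T) → ℝ :=
    fun p => ∑ j : Fin N, ω (empMeas n p.2) p.1 * c p.1 (p.2 j) with hF
  have hFmeas : Measurable F := by
    apply Finset.measurable_sum
    intro j _
    exact (hω_meas.comp' (((aux_measurable_empMeas n N).comp measurable_snd).prodMk
      measurable_fst)).mul
      (hc_meas.comp' (measurable_fst.prodMk ((measurable_pi_apply j).comp measurable_snd)))
  have hFbdd : ∀ p, |F p| ≤ N * (B' * M') := by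
    intro p
    simpa using aux_abs_sum_le (Finset.univ : Finset (Fin N))
      (fun j => ω (empMeas n p.2) p.1 * c p.1 (p.2 j)) (fun j _ => hterm _ _ _)
  have hFint : Integrable F (γ.prod πN) := aux_integrable_of_bounded hFmeas hFbdd
  set K : ℝ := ∫ p, F p ∂(γ.prod πN) with hKdef
  -- the integrand for each fixed i
  set g : Fin (N + 1) → (Fin (N + 1) → T) → ℝ :=
    fun i x => ∑ j : Fin (N + 1), ω (empMeasErase n x i) (x i) * c (x i) (x j) with hg
  have hgmeas : ∀ i, Measurable (g i) := by
    intro i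
    apply Finset.measurable_sum
    intro j _
    have h1 : Measurable fun x : Fin (N + 1) → T => ω (empMeasErase n x i) (x i) :=
      hω_meas.comp' ((aux_measurable_empMeasErase n _ i).prodMk (measurable_pi_apply i))
    have h2 : Measurable fun x : Fin (N + 1) → T => c (x i) (x j) :=
      hc_meas.comp' (f := fun x : Fin (N + 1) → T => (x i, x j)) ((measurable_pi_apply i).prodMk (measurable_pi_apply j))
    exact h1.mul h2
  have hgbdd : ∀ i x, |g i x| ≤ (N + 1) * (B' * M') := by
    intro i x
    simpa using aux_abs_sum_le (Finset.univ : Finset (Fin (N + 1)))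
      (fun j => ω (empMeasErase n x i) (x i) * c (x i) (x j)) (fun j _ => hterm _ _ _)
  have hgint : ∀ i, Integrable (g i) (Measure.pi fun _ : Fin (N + 1) => γ) :=
    fun i => aux_integrable_of_bounded (hgmeas i) (hgbdd i)
  -- Step A: pull the sum over i out of the integral
  rw [show (fun x : Fin (N + 1) → T => ∑ i : Fin (N + 1), ∑ j : Fin (N + 1),
      ω (empMeasErase n x i) (x i) * c (x i) (x j)) = fun x => ∑ i : Fin (N + 1), g i x from rfl,
    integral_finset_sum Finset.univ (fun i _ => hgint i)]
  -- Step B: each i-integral equals K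
  have key : ∀ i : Fin (N + 1), ∫ x, g i x ∂(Measure.pi fun _ : Fin (N + 1) => γ) = K := by
    intro i
    set e := MeasurableEquiv.piFinSuccAbove (fun _ : Fin (N + 1) => T) i with he
    have hmp := measurePreserving_piFinSuccAbove (fun _ : Fin (N + 1) => γ) i
    have h1 : ∫ x, g i x ∂(Measure.pi fun _ : Fin (N + 1) => γ)
        = ∫ p, g i (e.symm p) ∂(γ.prod πN) := by
      rw [← hmp.integral_comp e.measurableEmbedding (fun p => g i (e.symm p))]
      simp only [he, MeasurableEquiv.symm_apply_apply]
    rw [h1, hKdef]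
    congr 1
    funext p
    obtain ⟨z, y⟩ := p
    have hsymm : e.symm (z, y) = i.insertNth z y := by
      simp [he, MeasurableEquiv.piFinSuccAbove, Fin.insertNthEquiv]
    rw [hsymm]
    simp only [hg, hF, Fin.insertNth_apply_same, aux_empMeasErase_insertNth]
    rw [Fin.sum_univ_succAbove
      (fun j => ω (empMeas n y) z * c z (Fin.insertNth (α := fun _ => T) i z y j)) i]
    simp [Fin.insertNth_apply_same, Fin.insertNth_apply_succAbove, hc_diag z]
  simp only [key, Finset.sum_const, Finset.card_univ, Fintype.card_fin, nsmul_eq_mul]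
  -- Step C: Fubini and pulling the sum out of the inner integral
  have hC : K = ∫ y, (∑ j : Fin N, ∫ z, ω (empMeas n y) z * c z (y j) ∂γ) ∂πN := by
    rw [hKdef, MeasureTheory.integral_prod_symm F hFint]
    congr 1
    funext y
    rw [show (fun z => F (z, y)) = fun z => ∑ j : Fin N, ω (empMeas n y) z * c z (y j) from rfl]
    rw [integral_finset_sum]
    intro j _
    apply aux_integrable_of_bounded
    · exact (hω_meas.comp' (measurable_const.prodMk measurable_id)).mul
        (hc_meas.comp' (measurable_id.prodMk measurable_const))
    · exact fun z => hterm _ _ _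
  rw [hC]
  push_cast
  ring
end
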